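/- Let D(β;λ) := ψ²(δβ²ρ+1) + (1-ρ²)(1-δβ²ρ)(s/τ) and F(β;λ) := δβ² + ψ²ρ(1-δ²β⁴)/D(β;λ), where λ = (δ,ψ,ρ,s,τ). If |δ| < 1, 0 < ρ < 1, ψ ≠ 0, s > 0, and τ > 0, then the set S := {β ∈ [0,1] : β = F(β;λ)} of behavioural equilibria is nonempty, every element of S lies in the open interval (0,1), and S contains at most three elements. -/

import Mathlib

/-- The denominator `D(β;λ)` with `λ = (δ,ψ,ρ,s,τ)`. -/
noncomputable def Dfun (δ ψ ρ s τ β : ℝ) : ℝ :=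
  ψ ^ 2 * (δ * β ^ 2 * ρ + 1) + (1 - ρ ^ 2) * (1 - δ * β ^ 2 * ρ) * (s / τ)

/-- The fixed-point map `F(β;λ)`. -/
noncomputable def Ffun (δ ψ ρ s τ β : ℝ) : ℝ :=
  δ * β ^ 2 + ψ ^ 2 * ρ * (1 - δ ^ 2 * β ^ 4) / Dfun δ ψ ρ s τ β

open Polynomial

/-- A finset of reals of cardinality at most 3 is contained in a 3-element set. -/
lemma aux_three (t : Finset ℝ) (h : t.card ≤ 3) :
    ∃ a b c : ℝ, (t : Set ℝ) ⊆ {a, b, c} := by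
  obtain h0 | h1 | h2 | h3 : t.card = 0 ∨ t.card = 1 ∨ t.card = 2 ∨ t.card = 3 := by omega
  · refine ⟨0, 0, 0, ?_⟩
    rw [Finset.card_eq_zero] at h0; subst h0; simp
  · obtain ⟨a, rfl⟩ := Finset.card_eq_one.1 h1
    exact ⟨a, a, a, by simp⟩
  · obtain ⟨a, b, -, rfl⟩ := Finset.card_eq_two.1 h2
    refine ⟨a, b, b, ?_⟩
    intro x hx; simp at hx ⊢; tauto
  · obtain ⟨a, b, c, -, -, -, rfl⟩ := Finset.card_eq_three.1 h3
    refine ⟨a, b, c, ?_⟩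
    intro x hx; simp at hx ⊢; tauto

/-- A quartic with positive leading coefficient and negative constant term has a
negative root. -/
lemma exists_neg_root (e4 e3 e2 e1 e0 : ℝ) (h4 : 0 < e4) (h0 : e0 < 0) :
    ∃ r : ℝ, r < 0 ∧
      eval r (C e4 * X ^ 4 + C e3 * X ^ 3 + C e2 * X ^ 2 + C e1 * X + C e0) = 0 := by
  set P : ℝ[X] := C e4 * X ^ 4 + C e3 * X ^ 3 + C e2 * X ^ 2 + C e1 * X + C e0 with hP
  set M : ℝ := 1 + (|e3| + |e2| + |e1| + |e0|) / e4 with hM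
  have hSig : 0 ≤ |e3| + |e2| + |e1| + |e0| := by positivity
  have hM1 : 1 ≤ M := by
    rw [hM]; nlinarith [div_nonneg hSig h4.le]
  have hM0 : 0 < M := by linarith
  have hM3 : 0 < M ^ 3 := by positivity
  have hM23 : M ^ 2 ≤ M ^ 3 := by nlinarith
  have hM13 : M ≤ M ^ 3 := by nlinarith
  have h13 : (1:ℝ) ≤ M ^ 3 := by nlinarith
  have hcan : e4 * M = e4 + (|e3| + |e2| + |e1| + |e0|) := by
    rw [hM, mul_add, mul_one, mul_div_cancel₀ _ h4.ne']
  have hc4 : e4 * M ^ 4 = (e4 + (|e3| + |e2| + |e1| + |e0|)) * M ^ 3 := by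
    rw [show e4 * M ^ 4 = (e4 * M) * M ^ 3 by ring, hcan]
  have b3 : e3 * M ^ 3 ≤ |e3| * M ^ 3 :=
    mul_le_mul_of_nonneg_right (le_abs_self e3) hM3.le
  have b2 : -(|e2| * M ^ 3) ≤ e2 * M ^ 2 := by
    have h1' : -|e2| ≤ e2 := neg_abs_le e2
    nlinarith [abs_nonneg e2, sq_nonneg M]
  have b1 : e1 * M ≤ |e1| * M ^ 3 := by
    nlinarith [le_abs_self e1, abs_nonneg e1]
  have b0 : -(|e0| * M ^ 3) ≤ e0 := by
    have h1' : -|e0| ≤ e0 := neg_abs_le e0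
    nlinarith [abs_nonneg e0]
  have hevalM : eval (-M) P =
      e4 * M ^ 4 - e3 * M ^ 3 + e2 * M ^ 2 - e1 * M + e0 := by
    simp [hP]; ring
  have hpos : 0 < eval (-M) P := by
    rw [hevalM]
    linarith [mul_pos h4 hM3]
  have heval0 : eval 0 P = e0 := by simp [hP]
  have hcont : ContinuousOn (fun x => eval x P) (Set.Icc (-M) 0) :=
    (Polynomial.continuous P).continuousOn
  have hsub := intermediate_value_Ioo' (by linarith : -M ≤ (0:ℝ)) hcont
  have h0mem : (0:ℝ) ∈ Set.Ioo (eval 0 P) (eval (-M) P) := by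
    rw [heval0]; exact ⟨h0, hpos⟩
  obtain ⟨r, hr, hr0⟩ := hsub h0mem
  exact ⟨r, hr.2, hr0⟩

/-- If `|δ| < 1`, `0 < ρ < 1`, `ψ ≠ 0`, `s > 0`, `τ > 0`, then the set
`S = {β ∈ [0,1] : β = F(β;λ)}` of behavioural equilibria is nonempty, every element
lies in the open interval `(0,1)`, and `S` has at most three elements. -/
theorem equilibria_nonempty_interior_atMostThree (δ ψ ρ s τ : ℝ) (hδ : |δ| < 1)
    (hρ0 : 0 < ρ) (hρ1 : ρ < 1) (hψ : ψ ≠ 0) (hs : 0 < s) (hτ : 0 < τ) :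
    {β : ℝ | β ∈ Set.Icc (0 : ℝ) 1 ∧ β = Ffun δ ψ ρ s τ β}.Nonempty ∧
    {β : ℝ | β ∈ Set.Icc (0 : ℝ) 1 ∧ β = Ffun δ ψ ρ s τ β} ⊆ Set.Ioo (0 : ℝ) 1 ∧
    ∃ a b c : ℝ,
      {β : ℝ | β ∈ Set.Icc (0 : ℝ) 1 ∧ β = Ffun δ ψ ρ s τ β} ⊆ {a, b, c} := by
  obtain ⟨hδ2, hδ1⟩ := abs_lt.1 hδ
  have hψ2 : 0 < ψ ^ 2 := by positivity
  have hK : 0 < s / τ := div_pos hs hτ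
  set K := s / τ with hKdef
  set P : ℝ[X] := C (δ ^ 2 * ρ * (1 - ρ ^ 2) * K) * X ^ 4
      + C (δ * ρ * (ψ ^ 2 - (1 - ρ ^ 2) * K)) * X ^ 3
      + C (-(δ * (ψ ^ 2 + (1 - ρ ^ 2) * K))) * X ^ 2
      + C (ψ ^ 2 + (1 - ρ ^ 2) * K) * X + C (-(ψ ^ 2 * ρ)) with hP
  have heval : ∀ x : ℝ, eval x P =
      (x - δ * x ^ 2) * Dfun δ ψ ρ s τ x - ψ ^ 2 * ρ * (1 - δ ^ 2 * x ^ 4) := by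
    intro x; simp [hP, Dfun, hKdef]; ring
  -- positivity of the denominator on [0,1]
  have hD : ∀ x ∈ Set.Icc (0:ℝ) 1, 0 < Dfun δ ψ ρ s τ x := by
    intro x hx
    obtain ⟨hx0, hx1⟩ := hx
    have hx2 : x ^ 2 ≤ 1 := by nlinarith
    have hx2' : 0 ≤ x ^ 2 := sq_nonneg x
    have habs : |δ * x ^ 2 * ρ| < 1 := by
      rw [abs_mul, abs_mul, abs_of_nonneg hx2', abs_of_nonneg hρ0.le]
      nlinarith [abs_nonneg δ, mul_nonneg (abs_nonneg δ) hx2']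
    obtain ⟨h2, h1⟩ := abs_lt.1 habs
    unfold Dfun
    rw [← hKdef]
    nlinarith [mul_pos (mul_pos (show (0:ℝ) < 1 - ρ^2 by nlinarith)
      (show (0:ℝ) < 1 - δ * x ^ 2 * ρ by linarith)) hK]
  -- fixed points are roots of P
  have hfix : ∀ x ∈ Set.Icc (0:ℝ) 1, (x = Ffun δ ψ ρ s τ x ↔ eval x P = 0) := by
    intro x hx
    have hDx := hD x hx
    have hDx' : Dfun δ ψ ρ s τ x ≠ 0 := ne_of_gt hDx
    rw [heval x]
    unfold Ffun
    rw [show δ * x ^ 2 + ψ ^ 2 * ρ * (1 - δ ^ 2 * x ^ 4) / Dfun δ ψ ρ s τ x =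
        ψ ^ 2 * ρ * (1 - δ ^ 2 * x ^ 4) / Dfun δ ψ ρ s τ x + δ * x ^ 2 from add_comm _ _,
      ← sub_eq_iff_eq_add, eq_div_iff hDx']
    constructor
    · intro h; linarith [h]
    · intro h; linarith [h]
  -- sign of P at the endpoints
  have hg0 : eval (0:ℝ) P < 0 := by
    have h0 : eval (0:ℝ) P = -(ψ ^ 2 * ρ) := by rw [heval 0]; ring
    rw [h0]; nlinarith
  have hg1 : 0 < eval (1:ℝ) P := by
    rw [heval 1]
    have hδρ : 0 < 1 - δ * ρ := by nlinarith [mul_pos (show (0:ℝ) < 1 - δ by linarith) hρ0]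
    have hA : 0 < (1 - δ) * (ψ ^ 2 * (1 - ρ)) :=
      mul_pos (by linarith) (mul_pos hψ2 (by linarith))
    have hB : 0 < (1 - δ) * ((1 - ρ ^ 2) * ((1 - δ * ρ) * K)) :=
      mul_pos (by linarith) (mul_pos (by nlinarith) (mul_pos hδρ hK))
    unfold Dfun
    rw [← hKdef]
    nlinarith [hA, hB]
  have hcont : ContinuousOn (fun x => eval x P) (Set.Icc (0:ℝ) 1) :=
    (Polynomial.continuous P).continuousOn
  -- nonemptiness
  have hne : {β : ℝ | β ∈ Set.Icc (0 : ℝ) 1 ∧ β = Ffun δ ψ ρ s τ β}.Nonempty := by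
    obtain ⟨x, hx, hxe⟩ := intermediate_value_Ioo (by norm_num : (0:ℝ) ≤ 1) hcont ⟨hg0, hg1⟩
    have hxI : x ∈ Set.Icc (0:ℝ) 1 := ⟨hx.1.le, hx.2.le⟩
    exact ⟨x, hxI, (hfix x hxI).2 hxe⟩
  refine ⟨hne, ?_, ?_⟩
  -- interiority
  · intro x hx
    obtain ⟨hxI, hxF⟩ := hx
    have hxe := (hfix x hxI).1 hxF
    refine ⟨hxI.1.lt_of_ne' ?_, hxI.2.lt_of_ne ?_⟩
    · intro h; rw [h] at hxe; exact hg0.ne hxe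
    · intro h; rw [h] at hxe; exact hg1.ne' hxe
  -- at most three equilibria
  · by_cases hδ0 : δ = 0
    · subst hδ0
      refine ⟨Ffun 0 ψ ρ s τ 0, Ffun 0 ψ ρ s τ 0, Ffun 0 ψ ρ s τ 0, ?_⟩
      intro x hx
      have hx2 := hx.2
      rw [show Ffun 0 ψ ρ s τ x = Ffun 0 ψ ρ s τ 0 by simp [Ffun, Dfun]] at hx2
      simp only [Set.mem_insert_iff, Set.mem_singleton_iff]
      exact Or.inl hx2
    · have he4 : 0 < δ ^ 2 * ρ * (1 - ρ ^ 2) * K :=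
        mul_pos (mul_pos (mul_pos (pow_two_pos_of_ne_zero hδ0) hρ0)
          (by nlinarith)) hK
      have he0 : -(ψ ^ 2 * ρ) < 0 := by nlinarith
      obtain ⟨r, hrneg, hreval⟩ := exists_neg_root _
        (δ * ρ * (ψ ^ 2 - (1 - ρ ^ 2) * K)) (-(δ * (ψ ^ 2 + (1 - ρ ^ 2) * K)))
        (ψ ^ 2 + (1 - ρ ^ 2) * K) _ he4 he0
      have hrP : eval r P = 0 := by rw [hP]; exact hreval
      have hPne : P ≠ 0 := fun h => by rw [h] at hg1; simp at hg1
      have hdeg : P.natDegree ≤ 4 := by rw [hP]; compute_degree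
      have hcard : (P.roots.toFinset.erase r).card ≤ 3 := by
        have h1 : P.roots.toFinset.card ≤ 4 :=
          le_trans (Multiset.toFinset_card_le _) (le_trans (Polynomial.card_roots' P) hdeg)
        have hrmem : r ∈ P.roots.toFinset :=
          Multiset.mem_toFinset.2 (Polynomial.mem_roots'.2 ⟨hPne, hrP⟩)
        rw [Finset.card_erase_of_mem hrmem]; omega
      obtain ⟨a, b, c, habc⟩ := aux_three _ hcard
      refine ⟨a, b, c, ?_⟩
      intro x hx
      apply habc
      rw [Finset.mem_coe, Finset.mem_erase]
      refine ⟨?_, Multiset.mem_toFinset.2 (Polynomial.mem_roots'.2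
        ⟨hPne, (hfix x hx.1).1 hx.2⟩)⟩
      intro h
      rw [h] at hx
      exact absurd hx.1.1 (not_le.2 hrneg)
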